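/- Let g ≥ 2 be an integer and let f be a nonnegative trigonometric polynomial with a unique zero x₀ ∈ [0,2π), of finite order, so that β_min = min{ i ∈ ℕ : lim_{x→x₀} |x−x₀|^{2i}/f(x) < ∞ } exists. For any β ≥ β_min, the trigonometric polynomial p(x) = Π_{x̂ ∈ M_g(x₀)} (2 − 2cos(x − x̂))^{⌈β/2⌉} satisfies the TGM conditions (i) and (ii) relative to f and g. -/

import Mathlib

open Complex Filter Topology

noncomputable section

lemma tendsto_sin_div_self : Tendsto (fun t : ℝ => Real.sin t / t) (𝓝[≠] (0:ℝ)) (𝓝 1) := by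
  have h := Real.hasDerivAt_sin 0
  rw [Real.cos_zero] at h
  have h2 := hasDerivAt_iff_tendsto_slope.mp h
  refine h2.congr (fun t => ?_)
  simp [slope_fun_def, Real.sin_zero, div_eq_inv_mul]

lemma tendsto_two_sub_two_cos_div_sq :
    Tendsto (fun t : ℝ => (2 - 2 * Real.cos t) / t ^ 2) (𝓝[≠] (0:ℝ)) (𝓝 1) := by
  have hhalf : Tendsto (fun t : ℝ => t / 2) (𝓝[≠] (0:ℝ)) (𝓝[≠] (0:ℝ)) := by
    apply tendsto_nhdsWithin_of_tendsto_nhds_of_eventually_within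
    · exact tendsto_nhdsWithin_of_tendsto_nhds (by simpa using (continuous_id.div_const (2:ℝ)).tendsto (0:ℝ))
    · filter_upwards [self_mem_nhdsWithin] with t ht
      simpa using div_ne_zero ht two_ne_zero
  have hcomp := (tendsto_sin_div_self.comp hhalf).pow 2
  rw [one_pow] at hcomp
  refine hcomp.congr' ?_
  filter_upwards [self_mem_nhdsWithin] with t (ht : t ≠ 0)
  have hs : Real.sin (t / 2) ^ 2 = 1 / 2 - Real.cos t / 2 := by
    have := Real.sin_sq_eq_half_sub (t / 2)
    rwa [mul_div_cancel₀ t two_ne_zero] at this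
  have h2 : t ^ 2 ≠ 0 := pow_ne_zero _ ht
  show (Real.sin (t / 2) / (t / 2)) ^ 2 = (2 - 2 * Real.cos t) / t ^ 2
  rw [div_pow, hs, div_eq_div_iff (pow_ne_zero _ (div_ne_zero ht two_ne_zero)) h2]
  ring


/-- A real-valued function is a trigonometric polynomial: a finite sum `∑_{|j|≤c} a_j e^{ijx}`. -/
def IsTrigPolyR (f : ℝ → ℝ) : Prop :=
  ∃ (c : ℕ) (a : ℤ → ℂ), ∀ x : ℝ,
    (f x : ℂ) = ∑ j ∈ Finset.Icc (-(c : ℤ)) (c : ℤ), a j * Complex.exp (Complex.I * (j : ℂ) * (x : ℂ))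

/-- TGM condition (i): for every zero `x₀` of `f` (in `[0,2π)`), for each `k = 1,…,g−1`,
`lim_{x→x₀} p(x + 2πk/g)² / f(x)` exists finite. -/
def TGMCondOne (f p : ℝ → ℝ) (g : ℕ) : Prop :=
  ∀ x₀ ∈ Set.Ico (0 : ℝ) (2 * Real.pi), f x₀ = 0 →
    ∀ j : ℕ, 1 ≤ j → j < g →
      ∃ L : ℝ,
        Filter.Tendsto (fun x : ℝ => (p (x + 2 * Real.pi * (j : ℝ) / (g : ℝ)))^2 / f x)
          (nhdsWithin x₀ {x : ℝ | f x ≠ 0}) (nhds L)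

/-- TGM condition (ii): `∑_{y ∈ Ω_g(x)} p(y)² > 0` for all `x ∈ [0,2π)`. -/
def TGMCondTwo (p : ℝ → ℝ) (g : ℕ) : Prop :=
  ∀ x ∈ Set.Ico (0 : ℝ) (2 * Real.pi),
    0 < ∑ j ∈ Finset.range g, (p (x + 2 * Real.pi * (j : ℝ) / (g : ℝ)))^2

/-- The projected symbol `f̂(x) = (1/g) ∑_{y ∈ Ω_g(x/g)} f(y) |p(y)|²`. -/
def projSymbol (g : ℕ) (f p : ℝ → ℝ) : ℝ → ℝ := fun x =>
  ((g : ℝ))⁻¹ *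
    ∑ j ∈ Finset.range g,
      f ((x + 2 * Real.pi * (j : ℝ)) / (g : ℝ)) * (p ((x + 2 * Real.pi * (j : ℝ)) / (g : ℝ)))^2


theorem canonical_projector_satisfies_TGM (g : ℕ) (hg : 2 ≤ g)
    (f : ℝ → ℝ) (hf : IsTrigPolyR f) (hf0 : ∀ x, 0 ≤ f x)
    (x₀ : ℝ) (hx₀ : x₀ ∈ Set.Ico (0 : ℝ) (2 * Real.pi)) (hzero : f x₀ = 0)
    (huniq : ∀ x ∈ Set.Ico (0 : ℝ) (2 * Real.pi), f x = 0 → x = x₀)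
    (β : ℕ)
    (hβ : ∃ L : ℝ,
      Filter.Tendsto (fun x : ℝ => |x - x₀| ^ (2 * β) / f x)
        (nhdsWithin x₀ {x : ℝ | f x ≠ 0}) (nhds L)) :
    TGMCondOne f
        (fun x : ℝ => ∏ j ∈ Finset.Ico 1 g,
          (2 - 2 * Real.cos (x - (x₀ + 2 * Real.pi * (j : ℝ) / (g : ℝ)))) ^ ((β + 1) / 2))
        g
      ∧ TGMCondTwo
        (fun x : ℝ => ∏ j ∈ Finset.Ico 1 g,
          (2 - 2 * Real.cos (x - (x₀ + 2 * Real.pi * (j : ℝ) / (g : ℝ)))) ^ ((β + 1) / 2))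
        g := by
  constructor
  · intro x₁ hx₁ hz1 j hj1 hjg
    have hx1 : x₁ = x₀ := huniq x₁ hx₁ hz1
    subst hx1
    obtain ⟨L, hL⟩ := hβ
    set m : ℕ := (β + 1) / 2 with hm
    have hβle : β ≤ 2 * m := by omega
    set e : ℕ := 2 * m - β with he
    have hβe : β + e = 2 * m := by omega
    set c : ℕ → ℝ := fun i => 2 * Real.pi * (i : ℝ) / (g : ℝ) with hc
    set r : ℝ → ℝ := fun x => ∏ j' ∈ (Finset.Ico 1 g).erase j,
      (2 - 2 * Real.cos (x + c j - (x₁ + c j'))) ^ m with hr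
    refine ⟨((1:ℝ) ^ β * (2 - 2 * Real.cos (0:ℝ)) ^ e * (r x₁) ^ 2) * L, ?_⟩
    -- the filter is finer than 𝓝[≠] x₁
    have hfil : nhdsWithin x₁ {x : ℝ | f x ≠ 0} ≤ 𝓝[≠] x₁ := by
      apply nhdsWithin_mono
      intro x hx
      simp only [Set.mem_setOf_eq] at hx ⊢
      intro hxx; rw [Set.mem_singleton_iff] at hxx; exact hx (hxx ▸ hz1)
    have hsub : Tendsto (fun x : ℝ => x - x₁) (𝓝[≠] x₁) (𝓝[≠] (0:ℝ)) := by
      apply tendsto_nhdsWithin_of_tendsto_nhds_of_eventually_within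
      · exact tendsto_nhdsWithin_of_tendsto_nhds
          (by simpa using (continuous_sub_right x₁).tendsto x₁)
      · filter_upwards [self_mem_nhdsWithin] with x hx
        simpa [sub_ne_zero] using hx
    have hA : Tendsto (fun x : ℝ => ((2 - 2*Real.cos (x - x₁))/(x - x₁)^2)^β)
        (𝓝[≠] x₁) (𝓝 ((1:ℝ)^β)) := (tendsto_two_sub_two_cos_div_sq.comp hsub).pow β
    have hB : Tendsto (fun x : ℝ => (2 - 2*Real.cos (x - x₁))^e) (𝓝[≠] x₁)
        (𝓝 ((2 - 2*Real.cos (0:ℝ))^e)) := by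
      apply tendsto_nhdsWithin_of_tendsto_nhds
      have hcont : Continuous fun x : ℝ => (2 - 2*Real.cos (x - x₁))^e := by fun_prop
      simpa using hcont.tendsto x₁
    have hrc : Continuous r := by
      rw [hr]
      exact continuous_finset_prod _ (fun i _ => by fun_prop)
    have hC : Tendsto (fun x : ℝ => (r x)^2) (𝓝[≠] x₁) (𝓝 ((r x₁)^2)) :=
      tendsto_nhdsWithin_of_tendsto_nhds ((hrc.pow 2).tendsto x₁)
    have total := (((hA.mul hB).mul hC).mono_left hfil).mul hL
    refine total.congr' ?_
    filter_upwards [self_mem_nhdsWithin] with x hfx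
    have hfx' : f x ≠ 0 := hfx
    have hxx : x ≠ x₁ := fun h => hfx' (h ▸ hz1)
    have ht : x - x₁ ≠ 0 := sub_ne_zero.mpr hxx
    have hprod : (∏ j' ∈ Finset.Ico 1 g,
        (2 - 2*Real.cos (x + 2 * Real.pi * (j:ℝ) / (g:ℝ) - (x₁ + 2 * Real.pi * (j':ℝ) / (g:ℝ))))^m)
        = (2 - 2*Real.cos (x - x₁))^m * r x := by
      rw [← Finset.mul_prod_erase _ _ (Finset.mem_Ico.mpr ⟨hj1, hjg⟩)]
      have harg : x + 2 * Real.pi * (j:ℝ) / (g:ℝ) - (x₁ + 2 * Real.pi * (j:ℝ) / (g:ℝ)) = x - x₁ := by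
        ring
      rw [harg, hr]
    have habs : |x - x₁| ^ (2*β) = ((x - x₁)^2)^β := by
      rw [pow_mul, _root_.sq_abs]
    have key : ((2 - 2*Real.cos (x - x₁))/(x - x₁)^2)^β * (2 - 2*Real.cos (x - x₁))^e
        * ((x - x₁)^2)^β = (2 - 2*Real.cos (x - x₁))^(β + e) := by
      have hB2 : ((x - x₁)^2)^β ≠ 0 := pow_ne_zero _ (pow_ne_zero _ ht)
      rw [div_pow, div_mul_eq_mul_div, div_mul_eq_mul_div, div_eq_iff hB2, pow_add]
    show ((2 - 2*Real.cos (x - x₁))/(x - x₁)^2)^β * (2 - 2*Real.cos (x - x₁))^e * (r x)^2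
        * (|x - x₁| ^ (2*β) / f x)
      = (∏ j' ∈ Finset.Ico 1 g,
        (2 - 2*Real.cos (x + 2 * Real.pi * (j:ℝ) / (g:ℝ) - (x₁ + 2 * Real.pi * (j':ℝ) / (g:ℝ))))^m)^2 / f x
    rw [hprod, habs]
    have hms : ((2 - 2*Real.cos (x - x₁))^m * r x)^2
        = (2 - 2*Real.cos (x - x₁))^(β + e) * (r x)^2 := by
      rw [mul_pow, ← pow_mul, mul_comm m 2, ← hβe]
    rw [hms]
    calc ((2 - 2*Real.cos (x - x₁))/(x - x₁)^2)^β * (2 - 2*Real.cos (x - x₁))^e * (r x)^2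
        * (((x - x₁)^2)^β / f x)
        = (((2 - 2*Real.cos (x - x₁))/(x - x₁)^2)^β * (2 - 2*Real.cos (x - x₁))^e
          * ((x - x₁)^2)^β) * (r x)^2 / f x := by ring
      _ = (2 - 2*Real.cos (x - x₁))^(β + e) * (r x)^2 / f x := by rw [key]
  · intro x hx
    set m : ℕ := (β + 1) / 2 with hm
    simp only
    have key : ∃ j ∈ Finset.range g, (∏ j' ∈ Finset.Ico 1 g,
        (2 - 2 * Real.cos (x + 2 * Real.pi * (j : ℝ) / (g : ℝ) - (x₀ + 2 * Real.pi * (j' : ℝ) / (g : ℝ)))) ^ m) ≠ 0 := by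
      by_contra hcon
      push_neg at hcon
      rcases Nat.eq_zero_or_pos m with hm0 | hmpos
      · have := hcon 0 (Finset.mem_range.mpr (by omega))
        simp [hm0] at this
      · have H : ∀ jn : ℕ, jn < g → ∃ k : ℕ, (1 ≤ k ∧ k < g) ∧ ∃ n : ℤ,
            (n : ℝ) * (2 * Real.pi) = x + 2 * Real.pi * (jn : ℝ) / (g : ℝ)
              - (x₀ + 2 * Real.pi * (k : ℝ) / (g : ℝ)) := by
          intro jn hjn
          have h0 := hcon jn (Finset.mem_range.mpr hjn)
          obtain ⟨k, hkmem, hk0⟩ := Finset.prod_eq_zero_iff.mp h0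
          have hbase := (pow_eq_zero_iff hmpos.ne').mp hk0
          have hcos : Real.cos (x + 2 * Real.pi * (jn : ℝ) / (g : ℝ)
              - (x₀ + 2 * Real.pi * (k : ℝ) / (g : ℝ))) = 1 := by linarith
          obtain ⟨n, hn⟩ := (Real.cos_eq_one_iff _).mp hcos
          exact ⟨k, ⟨(Finset.mem_Ico.mp hkmem).1, (Finset.mem_Ico.mp hkmem).2⟩, n, hn⟩
        choose k hk n hn using H
        have h20 : 0 < g := by omega
        have hgR : (g : ℝ) ≠ 0 := Nat.cast_ne_zero.mpr (by omega)
        have hval : ∀ jn (hjn : jn < g),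
            (((g : ℤ) * n jn hjn + (k jn hjn : ℤ) - (jn : ℤ) : ℤ) : ℝ) * (2 * Real.pi)
              = (x - x₀) * g := by
          intro jn hjn
          have h1 := hn jn hjn
          push_cast
          field_simp at h1 ⊢
          nlinarith [h1, Real.pi_pos]
        set r₀ : ℤ := (g : ℤ) * n 0 h20 + (k 0 h20 : ℤ) - 0 with hr₀
        have heq : ∀ jn (hjn : jn < g),
            (g : ℤ) * n jn hjn + (k jn hjn : ℤ) - (jn : ℤ) = r₀ := by
          intro jn hjn
          have h1 := hval jn hjn
          have h2 := hval 0 h20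
          have h2π : (2 * Real.pi) ≠ 0 := by positivity
          have hcast := mul_right_cancel₀ h2π (h1.trans h2.symm)
          exact_mod_cast hcast
        set j₁ : ℕ := ((-r₀) % (g : ℤ)).toNat with hj₁
        have hgZ : (0 : ℤ) < g := by exact_mod_cast h20
        have hmod_nonneg : 0 ≤ (-r₀) % (g : ℤ) := Int.emod_nonneg _ (by omega)
        have hmod_lt : (-r₀) % (g : ℤ) < g := Int.emod_lt_of_pos _ hgZ
        have hcast1 : (j₁ : ℤ) = (-r₀) % (g : ℤ) := by rw [hj₁]; exact Int.toNat_of_nonneg hmod_nonneg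
        have hj₁g : j₁ < g := by
          have h3 : ((j₁ : ℤ)) < g := by rw [hcast1]; exact hmod_lt
          exact_mod_cast h3
        have hdvd : (g : ℤ) ∣ (r₀ + (j₁ : ℤ)) := by
          refine ⟨-((-r₀) / (g : ℤ)), ?_⟩
          rw [hcast1, Int.emod_def]; ring
        have hkey := heq j₁ hj₁g
        obtain ⟨q, hq⟩ := hdvd
        have hdvdk : (k j₁ hj₁g : ℤ) = (g : ℤ) * (q - n j₁ hj₁g) := by
          linear_combination hq + hkey
        have hk1 : (1 : ℤ) ≤ (k j₁ hj₁g : ℤ) := by exact_mod_cast (hk j₁ hj₁g).1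
        have hk2 : ((k j₁ hj₁g : ℤ)) < g := by exact_mod_cast (hk j₁ hj₁g).2
        rcases le_or_gt (q - n j₁ hj₁g) 0 with hq0 | hq0
        · nlinarith
        · nlinarith
    obtain ⟨j, hj, hne⟩ := key
    refine Finset.sum_pos' (fun i _ => sq_nonneg _) ⟨j, hj, ?_⟩
    exact lt_of_le_of_ne (sq_nonneg _) (Ne.symm (pow_ne_zero 2 hne))
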